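/- Let F : ℝ → ℝ be differentiable and let b₁₂, b₂₁, ε ∈ ℝ. Define I(M, H) = F((M² − H)/(b₁₂H − b₂₁ + εM)²) on the open set where b₁₂H − b₂₁ + εM ≠ 0. Then I satisfies the PDE [(H − 2M²)b₁₂ − εM + b₂₁]·∂I/∂M + 2[b₂₁M − b₁₂HM − εH]·∂I/∂H = 0 at every point of that set. -/

import Mathlib

theorem stmt_16 (F : ℝ → ℝ) (hF : Differentiable ℝ F) (b12 b21 ε : ℝ)
    (I : ℝ × ℝ → ℝ)
    (hI : ∀ p : ℝ × ℝ, I p = F ((p.1^2 - p.2) / (b12*p.2 - b21 + ε*p.1)^2)) :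
    ∀ p : ℝ × ℝ, b12*p.2 - b21 + ε*p.1 ≠ 0 →
      ((p.2 - 2*p.1^2)*b12 - ε*p.1 + b21) * fderiv ℝ I p (1, 0)
        + 2*(b21*p.1 - b12*p.2*p.1 - ε*p.2) * fderiv ℝ I p (0, 1) = 0 := by
  intro p hp
  have hIeq : I = fun q : ℝ × ℝ =>
      F ((q.1*q.1 - q.2) * ((b12*q.2 - b21 + ε*q.1)*(b12*q.2 - b21 + ε*q.1))⁻¹) := by
    funext q; rw [hI q, pow_two, pow_two, div_eq_mul_inv]
  have hu : HasFDerivAt (fun q : ℝ × ℝ => q.1*q.1 - q.2) _ p :=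
    ((hasFDerivAt_fst (𝕜 := ℝ) (p := p)).mul (hasFDerivAt_fst (𝕜 := ℝ) (p := p))).sub
      (hasFDerivAt_snd (𝕜 := ℝ) (p := p))
  have hd : HasFDerivAt (fun q : ℝ × ℝ => b12*q.2 - b21 + ε*q.1) _ p :=
    (((hasFDerivAt_snd (𝕜 := ℝ) (p := p)).const_mul b12).sub_const b21).add
      ((hasFDerivAt_fst (𝕜 := ℝ) (p := p)).const_mul ε)
  have hv : HasFDerivAt (fun q : ℝ × ℝ =>
      (b12*q.2 - b21 + ε*q.1)*(b12*q.2 - b21 + ε*q.1)) _ p := hd.mul hd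
  have hvne : (b12*p.2 - b21 + ε*p.1)*(b12*p.2 - b21 + ε*p.1) ≠ 0 := mul_ne_zero hp hp
  have hvinv : HasFDerivAt (fun q : ℝ × ℝ =>
      ((b12*q.2 - b21 + ε*q.1)*(b12*q.2 - b21 + ε*q.1))⁻¹) _ p :=
    (hasFDerivAt_inv' (𝕜 := ℝ) hvne).comp p hv
  have hg : HasFDerivAt (fun q : ℝ × ℝ =>
      (q.1*q.1 - q.2) * ((b12*q.2 - b21 + ε*q.1)*(b12*q.2 - b21 + ε*q.1))⁻¹) _ p :=
    hu.mul hvinv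
  have hFd := (hF ((p.1*p.1 - p.2) *
      ((b12*p.2 - b21 + ε*p.1)*(b12*p.2 - b21 + ε*p.1))⁻¹)).hasFDerivAt
  have h2 := (hFd.comp p hg).fderiv
  simp only [Function.comp_def] at h2
  rw [hIeq, h2]
  set f' := fderiv ℝ F ((p.1*p.1 - p.2) *
      ((b12*p.2 - b21 + ε*p.1)*(b12*p.2 - b21 + ε*p.1))⁻¹) 1 with hf'
  simp only [ContinuousLinearMap.comp_apply, ContinuousLinearMap.sub_apply,
    ContinuousLinearMap.add_apply, ContinuousLinearMap.smul_apply,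
    ContinuousLinearMap.coe_fst', ContinuousLinearMap.coe_snd',
    ContinuousLinearMap.neg_apply, ContinuousLinearMap.mulLeftRight_apply,
    smul_eq_mul]
  have hlin : ∀ v : ℝ, fderiv ℝ F ((p.1*p.1 - p.2) *
      ((b12*p.2 - b21 + ε*p.1)*(b12*p.2 - b21 + ε*p.1))⁻¹) v = v * f' := fun v => by
    simpa [hf'] using (fderiv ℝ F ((p.1*p.1 - p.2) *
      ((b12*p.2 - b21 + ε*p.1)*(b12*p.2 - b21 + ε*p.1))⁻¹)).map_smul v 1
  simp only [hlin]
  field_simp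
  ring
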